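/- Let (S_n)_{n∈ℤ} be a real-valued stochastic process with S_0 = 0, stationary increments (i.e., for every n_0 ∈ ℤ, the process (S_{n_0+n} − S_{n_0})_{n∈ℤ} has the same law as (S_n)_{n∈ℤ}), and such that P(S_j = S_k) = 0 for all j ≠ k. Then for every N ≥ 1, P(S_n ≤ 0 for all n with |n| ≤ N) ≤ 1/N. -/
import Mathlib


open MeasureTheory Filter

/-- If `(S_n)_{n∈ℤ}` is a real-valued process with `S_0 = 0`, stationary
increments, and `P(S_j = S_k) = 0` for `j ≠ k`, then for every `N ≥ 1`,
`P(S_n ≤ 0 for all |n| ≤ N) ≤ 1/N`. -/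
theorem stmt_0 {Ω : Type*} [MeasurableSpace Ω] (P : Measure Ω) [IsProbabilityMeasure P]
    (S : ℤ → Ω → ℝ) (hMeas : ∀ n, Measurable (S n))
    (hS0 : ∀ ω, S 0 ω = 0)
    (hStat : ∀ n₀ : ℤ,
      Measure.map (fun ω => fun n : ℤ => S (n₀ + n) ω - S n₀ ω) P
        = Measure.map (fun ω => fun n : ℤ => S n ω) P)
    (hNoTies : ∀ j k : ℤ, j ≠ k → P {ω | S j ω = S k ω} = 0)
    (N : ℕ) (hN : 1 ≤ N) :
    P {ω | ∀ n : ℤ, |n| ≤ (N : ℤ) → S n ω ≤ 0} ≤ (N : ENNReal)⁻¹ := by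
  classical
  set C : Set (ℤ → ℝ) := {f | ∀ n : ℤ, |n| ≤ (N : ℤ) → f n ≤ 0} with hC
  have hCm : MeasurableSet C := by
    have hCeq : C = ⋂ n : ℤ, {f : ℤ → ℝ | |n| ≤ (N : ℤ) → f n ≤ 0} := by
      ext f; simp [hC, Set.mem_iInter]
    rw [hCeq]
    refine MeasurableSet.iInter fun n => ?_
    by_cases h : |n| ≤ (N : ℤ)
    · simp only [h, forall_true_left]
      exact measurableSet_le (measurable_pi_apply n) measurable_const
    · simp [h]
  have hMeasOrig : Measurable fun ω => fun n : ℤ => S n ω :=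
    measurable_pi_lambda _ fun n => hMeas n
  set x := P {ω | ∀ n : ℤ, |n| ≤ (N : ℤ) → S n ω ≤ 0} with hx
  have hxC : x = Measure.map (fun ω => fun n : ℤ => S n ω) P C := by
    rw [Measure.map_apply hMeasOrig hCm]; rfl
  set G : ℤ → Set Ω := fun k => {ω | ∀ j : ℤ, 0 ≤ j → j ≤ (N : ℤ) → S j ω ≤ S k ω}
    with hG
  have hGm : ∀ k, MeasurableSet (G k) := by
    intro k
    have hGeq : G k = ⋂ j : ℤ, {ω | 0 ≤ j → j ≤ (N : ℤ) → S j ω ≤ S k ω} := by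
      ext ω; simp [hG, Set.mem_iInter]
    rw [hGeq]
    refine MeasurableSet.iInter fun j => ?_
    by_cases h0 : 0 ≤ j
    · by_cases hj : j ≤ (N : ℤ)
      · simp only [h0, hj, forall_true_left]
        exact measurableSet_le (hMeas j) (hMeas k)
      · simp [hj]
    · simp [h0]
  -- for each k in [1, N], x ≤ P (G k)
  have key : ∀ k : ℤ, 1 ≤ k → k ≤ (N : ℤ) → x ≤ P (G k) := by
    intro k hk1 hkN
    have hMeasSh : Measurable fun ω => fun n : ℤ => S (k + n) ω - S k ω :=
      measurable_pi_lambda _ fun n => (hMeas (k + n)).sub (hMeas k)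
    have hmap : P ((fun ω => fun n : ℤ => S (k + n) ω - S k ω) ⁻¹' C) = x := by
      rw [← Measure.map_apply hMeasSh hCm, hStat k, hxC]
    rw [← hmap]
    refine measure_mono ?_
    intro ω hω
    intro j hj0 hjN
    have hn : |j - k| ≤ (N : ℤ) := by
      rw [abs_le]; omega
    have := hω (j - k) hn
    simp only [Set.mem_setOf_eq] at this ⊢
    have hjk : k + (j - k) = j := by ring
    rw [hjk] at this
    linarith
  -- pairwise a.e.-disjointness of G on [1,N] (in fact on [0,N])
  have hdisj : Set.Pairwise ↑(Finset.Icc (1 : ℤ) (N : ℤ))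
      (Function.onFun (AEDisjoint P) G) := by
    intro k hk k' hk' hne
    simp only [Finset.coe_Icc, Set.mem_Icc] at hk hk'
    have hsub : G k ∩ G k' ⊆ {ω | S k ω = S k' ω} := by
      intro ω hω
      have h1 := hω.1 k' (by omega) hk'.2
      have h2 := hω.2 k (by omega) hk.2
      exact le_antisymm h2 h1
    exact measure_mono_null hsub (hNoTies k k' hne)
  have hsum : ∑ k ∈ Finset.Icc (1 : ℤ) (N : ℤ), P (G k)
      = P (⋃ k ∈ Finset.Icc (1 : ℤ) (N : ℤ), G k) :=
    (measure_biUnion_finset₀ hdisj fun k _ => (hGm k).nullMeasurableSet).symm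
  have hle1 : ∑ k ∈ Finset.Icc (1 : ℤ) (N : ℤ), P (G k) ≤ 1 := by
    rw [hsum]; exact prob_le_one
  have hNx : (N : ENNReal) * x ≤ 1 := by
    have hcard : (Finset.Icc (1 : ℤ) (N : ℤ)).card = N := by
      rw [Int.card_Icc]; omega
    calc (N : ENNReal) * x = ∑ _k ∈ Finset.Icc (1 : ℤ) (N : ℤ), x := by
          rw [Finset.sum_const, hcard, nsmul_eq_mul]
      _ ≤ ∑ k ∈ Finset.Icc (1 : ℤ) (N : ℤ), P (G k) := by
          refine Finset.sum_le_sum fun k hk => ?_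
          simp only [Finset.mem_Icc] at hk
          exact key k hk.1 hk.2
      _ ≤ 1 := hle1
  rw [ENNReal.le_inv_iff_mul_le, mul_comm]
  exact hNx
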